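/- Let k be a field of characteristic p > 0 and let f, g be polynomials over k with g ≠ 0. Then the rational function f/g^p is exact (i.e., is the formal derivative of some rational function in k(x)) if and only if the coefficient of x^j in f is zero for every natural number j with j ≡ p − 1 (mod p). -/

import Mathlib

open Polynomial

/-- `HasDerivRF f g` means `g` is the formal derivative of the rational function `f` in `k(x)`:
if `f = u / v` with `v ≠ 0`, then `g = (u' v - u v') / v ^ 2`. -/
def HasDerivRF {k : Type*} [Field k] (f g : RatFunc k) : Prop :=
  ∃ u v : Polynomial k, v ≠ 0 ∧
    f = algebraMap (Polynomial k) (RatFunc k) u / algebraMap (Polynomial k) (RatFunc k) v ∧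
    g = algebraMap (Polynomial k) (RatFunc k)
          (Polynomial.derivative u * v - u * Polynomial.derivative v) /
        algebraMap (Polynomial k) (RatFunc k) (v ^ 2)

/-- A rational function is exact if it is the formal derivative of some rational function. -/
def IsExactRF {k : Type*} [Field k] (g : RatFunc k) : Prop := ∃ f : RatFunc k, HasDerivRF f g



lemma modeq_iff_dvd_succ {p j : ℕ} (hp : 0 < p) : j ≡ p - 1 [MOD p] ↔ p ∣ (j + 1) := by
  rw [← Nat.modEq_zero_iff_dvd]
  constructor
  · intro h
    have h1 : j + 1 ≡ (p - 1) + 1 [MOD p] := Nat.ModEq.add_right 1 h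
    rwa [Nat.sub_add_cancel hp, Nat.ModEq, Nat.mod_self] at h1
  · intro h
    have h1 : j + 1 ≡ p [MOD p] := by rwa [Nat.ModEq, Nat.mod_self]
    have h2 : j + 1 ≡ (p - 1) + 1 [MOD p] := by rwa [Nat.sub_add_cancel hp]
    exact Nat.ModEq.add_right_cancel' 1 h2

lemma cancel_lemma {k : Type*} [Field k] (p : ℕ) (f V : Polynomial k) (hV0 : V ≠ 0)
    (hVp : ∀ b, ¬ p ∣ b → V.coeff b = 0)
    (h : ∀ j, j ≡ p - 1 [MOD p] → (f * V).coeff j = 0) :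
    ∀ j, j ≡ p - 1 [MOD p] → f.coeff j = 0 := by
  by_contra hc
  push_neg at hc
  have hex : ∃ j, j ≡ p - 1 [MOD p] ∧ f.coeff j ≠ 0 := hc
  classical
  let j := Nat.find hex
  obtain ⟨hjmod, hjne⟩ : j ≡ p - 1 [MOD p] ∧ f.coeff j ≠ 0 := Nat.find_spec hex
  have hmin : ∀ a < j, a ≡ p - 1 [MOD p] → f.coeff a = 0 := by
    intro a ha hamod
    by_contra hane
    exact absurd ⟨hamod, hane⟩ (Nat.find_min hex ha)
  have hVsupp : V.support.Nonempty := Polynomial.nonempty_support_iff.mpr hV0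
  let b0 := V.support.min' hVsupp
  have hb0mem : b0 ∈ V.support := V.support.min'_mem hVsupp
  have hb0ne : V.coeff b0 ≠ 0 := Polynomial.mem_support_iff.mp hb0mem
  have hb0dvd : p ∣ b0 := by
    by_contra hnd
    exact hb0ne (hVp b0 hnd)
  have hsum : (f * V).coeff (j + b0) = f.coeff j * V.coeff b0 := by
    rw [Polynomial.coeff_mul]
    apply Finset.sum_eq_single (j, b0)
    · rintro ⟨a, b⟩ hmem hne
      have hab : a + b = j + b0 := Finset.HasAntidiagonal.mem_antidiagonal.mp hmem
      by_cases hbd : p ∣ b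
      · rcases lt_trichotomy b b0 with hlt | heq | hgt
        · have : b ∉ V.support := fun hb => absurd (V.support.min'_le b hb) (not_le.mpr hlt)
          rw [Polynomial.notMem_support_iff.mp this, mul_zero]
        · subst heq
          have : a = j := by omega
          subst this
          exact absurd rfl hne
        · have halt : a < j := by omega
          have hamod : a ≡ p - 1 [MOD p] := by
            have h1 : a + b ≡ a [MOD p] := (Nat.modEq_zero_iff_dvd.mpr hbd).add_left a |>.trans
              (by simp [Nat.ModEq])
            have h2 : j + b0 ≡ j [MOD p] := (Nat.modEq_zero_iff_dvd.mpr hb0dvd).add_left j |>.trans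
              (by simp [Nat.ModEq])
            calc a ≡ a + b [MOD p] := h1.symm
              _ = j + b0 := hab
              _ ≡ j [MOD p] := h2
              _ ≡ p - 1 [MOD p] := hjmod
          rw [hmin a halt hamod, zero_mul]
      · rw [hVp b hbd, mul_zero]
    · intro hnot
      exact absurd (by simp : (j, b0) ∈ Finset.HasAntidiagonal.antidiagonal (j + b0)) hnot
  have hjb0 : (j + b0) ≡ p - 1 [MOD p] := by
    calc j + b0 ≡ j + 0 [MOD p] := Nat.ModEq.add_left j (Nat.modEq_zero_iff_dvd.mpr hb0dvd)
      _ = j := by ring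
      _ ≡ p - 1 [MOD p] := hjmod
  have := h (j + b0) hjb0
  rw [hsum] at this
  exact (mul_ne_zero hjne hb0ne) this

lemma exists_antideriv {k : Type*} [Field k] (p : ℕ) [CharP k p] (hp : 0 < p)
    (f : Polynomial k) (h : ∀ j, j ≡ p - 1 [MOD p] → f.coeff j = 0) :
    ∃ w : Polynomial k, derivative w = f := by
  refine ⟨∑ j ∈ Finset.range (f.natDegree + 1), C (f.coeff j * ((j : k) + 1)⁻¹) * X ^ (j + 1), ?_⟩
  rw [map_sum]
  conv_rhs => rw [f.as_sum_range]
  refine Finset.sum_congr rfl fun j _ => ?_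
  rw [derivative_C_mul_X_pow, Nat.add_sub_cancel, ← C_mul_X_pow_eq_monomial]
  by_cases hj : f.coeff j = 0
  · simp [hj]
  · have hjp : ¬ p ∣ (j + 1) := fun hd => hj (h j ((modeq_iff_dvd_succ hp).mpr hd))
    have hne : ((j : k) + 1) ≠ 0 := by
      intro h0
      apply hjp
      rw [← CharP.cast_eq_zero_iff k p]
      push_cast
      exact h0
    congr 1
    push_cast
    field_simp

lemma coeff_pow_char {k : Type*} [Field k] (p : ℕ) [CharP k p] (hp : 0 < p)
    (w : Polynomial k) (b : ℕ) (hb : ¬ p ∣ b) : (w ^ p).coeff b = 0 := by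
  have hd : derivative (w ^ p) = 0 := by
    rw [derivative_pow]
    simp [CharP.cast_eq_zero k p]
  rw [← Polynomial.expand_contract p hd hp.ne', Polynomial.coeff_expand hp]
  simp [hb]


/-- Over a field of characteristic `p > 0`, `f/g^p` is exact iff every coefficient of `f` in
degree `j ≡ p - 1 (mod p)` vanishes. -/
theorem stmt10 {k : Type*} [Field k] (p : ℕ) [CharP k p] (hp : 0 < p)
    (f g : Polynomial k) (hg : g ≠ 0) :
    IsExactRF (algebraMap (Polynomial k) (RatFunc k) f /
        algebraMap (Polynomial k) (RatFunc k) (g ^ p)) ↔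
      ∀ j : ℕ, j ≡ p - 1 [MOD p] → f.coeff j = 0 := by
  obtain ⟨q, rfl⟩ : ∃ q, p = q + 1 := ⟨p - 1, (Nat.succ_pred_eq_of_pos hp).symm⟩
  have hpk : ((q + 1 : ℕ) : k) = 0 := CharP.cast_eq_zero k (q + 1)
  constructor
  · intro hex
    unfold IsExactRF HasDerivRF at hex
    obtain ⟨F, u, v, hv, -, hG⟩ := hex
    have key : f * v ^ 2 = (derivative u * v - u * derivative v) * g ^ (q + 1) := by
      rw [div_eq_div_iff (RatFunc.algebraMap_ne_zero (pow_ne_zero _ hg))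
        (RatFunc.algebraMap_ne_zero (pow_ne_zero _ hv))] at hG
      apply RatFunc.algebraMap_injective k
      rw [map_mul, map_mul]
      exact hG
    have hq1 : ((q : k) + 1) = 0 := by exact_mod_cast hpk
    have hcast : C (((2 * q + 1 : ℕ) : k)) = -1 := by
      have h2 : ((2 * q + 1 : ℕ) : k) = -1 := by
        push_cast
        linear_combination 2 * hq1
      rw [h2, map_neg, map_one]
    have hder : derivative (u * v ^ (2 * q + 1)) =
        (derivative u * v - u * derivative v) * v ^ (2 * q) := by
      rw [derivative_mul, derivative_pow, Nat.add_sub_cancel, hcast, pow_succ]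
      ring
    have key2 : f * (v ^ 2) ^ (q + 1) = derivative (u * v ^ (2 * q + 1)) * g ^ (q + 1) := by
      have e2 : (v ^ 2) ^ (q + 1) = v ^ 2 * v ^ (2 * q) := by
        rw [← pow_mul, ← pow_add]
        congr 1
        ring
      rw [e2, ← mul_assoc, key, hder]
      ring
    refine cancel_lemma (q + 1) f ((v ^ 2) ^ (q + 1))
      (pow_ne_zero _ (pow_ne_zero _ hv))
      (fun b hb => coeff_pow_char (q + 1) (Nat.succ_pos q) (v ^ 2) b hb) ?_
    intro i hi
    rw [key2, Polynomial.coeff_mul]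
    apply Finset.sum_eq_zero
    rintro ⟨a, b⟩ hmem
    have hab : a + b = i := Finset.HasAntidiagonal.mem_antidiagonal.mp hmem
    by_cases hbd : (q + 1) ∣ b
    · have hamod : a ≡ (q + 1) - 1 [MOD q + 1] := by
        calc a ≡ a + b [MOD q + 1] :=
              ((Nat.modEq_zero_iff_dvd.mpr hbd).add_left a |>.trans (by simp [Nat.ModEq])).symm
          _ = i := hab
          _ ≡ (q + 1) - 1 [MOD q + 1] := hi
      have hdvd : (q + 1) ∣ (a + 1) := (modeq_iff_dvd_succ (Nat.succ_pos q)).mp hamod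
      have hz : ((a : k) + 1) = 0 := by
        exact_mod_cast (CharP.cast_eq_zero_iff k (q + 1) (a + 1)).mpr hdvd
      rw [Polynomial.coeff_derivative, hz, mul_zero, zero_mul]
    · rw [coeff_pow_char (q + 1) (Nat.succ_pos q) g b hbd, mul_zero]
  · intro h
    obtain ⟨w, hw⟩ := exists_antideriv (q + 1) (Nat.succ_pos q) f h
    unfold IsExactRF HasDerivRF
    refine ⟨algebraMap (Polynomial k) (RatFunc k) w /
        algebraMap (Polynomial k) (RatFunc k) (g ^ (q + 1)),
      w, g ^ (q + 1), pow_ne_zero _ hg, rfl, ?_⟩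
    have hdg : derivative (g ^ (q + 1)) = 0 := by
      rw [derivative_pow]
      simp [hpk]
    rw [hdg, hw, mul_zero, sub_zero]
    rw [div_eq_div_iff (RatFunc.algebraMap_ne_zero (pow_ne_zero _ hg))
      (RatFunc.algebraMap_ne_zero (pow_ne_zero _ (pow_ne_zero _ hg)))]
    rw [← map_mul, ← map_mul]
    congr 1
    ring
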